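/- For all natural numbers n and k with 1 ≤ k < n, the following inequality holds: 2^k·( Σ_{j=1}^{2^{n+1}} j + Σ_{i=1}^{k-1} Σ_{j=1}^{2^{n-i}} ( i·2^n + j·2^i ) + Σ_{j=1}^{(n-k)·2^{n-k}} ( k·2^n + j·2^k ) ) ≤ 2^{2n}·( 7·2^k + n·(n-k) ). -/

import Mathlib

lemma gauss' (M : ℕ) : 2 * ∑ j ∈ Finset.Icc 1 M, j = M * (M + 1) := by
  induction M with
  | zero => simp
  | succ M ih =>
    rw [Finset.sum_Icc_succ_top (by omega)]
    nlinarith [ih]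

lemma sumA (m : ℕ) : (∑ i ∈ Finset.Icc 1 m, i * 2 ^ (m - i)) + (m + 2) = 2 ^ (m + 1) := by
  induction m with
  | zero => simp
  | succ M ih =>
    rw [Finset.sum_Icc_succ_top (by omega)]
    have h : ∑ i ∈ Finset.Icc 1 M, i * 2 ^ (M + 1 - i)
        = 2 * ∑ i ∈ Finset.Icc 1 M, i * 2 ^ (M - i) := by
      rw [Finset.mul_sum]
      apply Finset.sum_congr rfl
      intro i hi
      rw [Finset.mem_Icc] at hi
      rw [show M + 1 - i = (M - i) + 1 by omega, pow_succ]
      ring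
    rw [h]
    simp only [Nat.sub_self, pow_zero, mul_one]
    have := pow_pos (by norm_num : (0:ℕ) < 2) (M + 1)
    rw [pow_succ]
    omega

lemma sumB (m : ℕ) : (∑ i ∈ Finset.Icc 1 m, 2 ^ (m - i)) + 1 = 2 ^ m := by
  induction m with
  | zero => simp
  | succ M ih =>
    rw [Finset.sum_Icc_succ_top (by omega)]
    have h : ∑ i ∈ Finset.Icc 1 M, 2 ^ (M + 1 - i)
        = 2 * ∑ i ∈ Finset.Icc 1 M, 2 ^ (M - i) := by
      rw [Finset.mul_sum]
      apply Finset.sum_congr rfl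
      intro i hi
      rw [Finset.mem_Icc] at hi
      rw [show M + 1 - i = (M - i) + 1 by omega, pow_succ]
      ring
    rw [h]
    simp only [Nat.sub_self, pow_zero]
    rw [pow_succ]
    omega

lemma sumA' (N m : ℕ) (h : m ≤ N) : ∑ i ∈ Finset.Icc 1 m, i * 2 ^ (N - i) ≤ 2 ^ (N + 1) := by
  calc ∑ i ∈ Finset.Icc 1 m, i * 2 ^ (N - i)
      = 2 ^ (N - m) * ∑ i ∈ Finset.Icc 1 m, i * 2 ^ (m - i) := by
        rw [Finset.mul_sum]
        apply Finset.sum_congr rfl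
        intro i hi
        rw [Finset.mem_Icc] at hi
        rw [show N - i = (N - m) + (m - i) by omega, pow_add]
        ring
    _ ≤ 2 ^ (N - m) * 2 ^ (m + 1) := by
        have := sumA m
        exact Nat.mul_le_mul_left _ (by omega)
    _ = 2 ^ (N + 1) := by rw [← pow_add]; congr 1; omega

lemma sumB' (N m : ℕ) (h : m ≤ N) : ∑ i ∈ Finset.Icc 1 m, 2 ^ (N - i) ≤ 2 ^ N := by
  calc ∑ i ∈ Finset.Icc 1 m, 2 ^ (N - i)
      = 2 ^ (N - m) * ∑ i ∈ Finset.Icc 1 m, 2 ^ (m - i) := by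
        rw [Finset.mul_sum]
        apply Finset.sum_congr rfl
        intro i hi
        rw [Finset.mem_Icc] at hi
        rw [show N - i = (N - m) + (m - i) by omega, pow_add]
    _ ≤ 2 ^ (N - m) * 2 ^ m := by
        have := sumB m
        exact Nat.mul_le_mul_left _ (by omega)
    _ = 2 ^ N := by rw [← pow_add]; congr 1; omega

lemma hlin (c d M : ℕ) : ∑ j ∈ Finset.Icc 1 M, (c + j * d)
    = M * c + (∑ j ∈ Finset.Icc 1 M, j) * d := by
  rw [Finset.sum_add_distrib, Finset.sum_const, ← Finset.sum_mul, Nat.card_Icc]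
  simp [smul_eq_mul]
theorem static_opt_bound (n k : ℕ) (hk : 1 ≤ k) (hkn : k < n) :
    2 ^ k * (∑ j ∈ Finset.Icc 1 (2 ^ (n + 1)), j
      + ∑ i ∈ Finset.Icc 1 (k - 1), ∑ j ∈ Finset.Icc 1 (2 ^ (n - i)), (i * 2 ^ n + j * 2 ^ i)
      + ∑ j ∈ Finset.Icc 1 ((n - k) * 2 ^ (n - k)), (k * 2 ^ n + j * 2 ^ k))
    ≤ 2 ^ (2 * n) * (7 * 2 ^ k + n * (n - k)) := by
  obtain ⟨k', rfl⟩ : ∃ k', k = k' + 1 := ⟨k - 1, by omega⟩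
  simp only [Nat.add_sub_cancel]
  set S1 := ∑ j ∈ Finset.Icc 1 (2 ^ (n + 1)), j with hS1
  set S2 := ∑ i ∈ Finset.Icc 1 k', ∑ j ∈ Finset.Icc 1 (2 ^ (n - i)), (i * 2 ^ n + j * 2 ^ i)
    with hS2
  set S3 := ∑ j ∈ Finset.Icc 1 ((n - (k' + 1)) * 2 ^ (n - (k' + 1))),
    ((k' + 1) * 2 ^ n + j * 2 ^ (k' + 1)) with hS3
  have e1 : 2 * S1 = 2 ^ (n + 1) * (2 ^ (n + 1) + 1) := gauss' _
  have b2 : 2 * S2 ≤ 2 ^ (2 * n + 2) + 2 ^ (2 * n) + k' * 2 ^ n := by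
    have h1 : 2 * S2
        = ∑ i ∈ Finset.Icc 1 k', (i * 2 ^ (2 * n + 1 - i) + (2 ^ (2 * n - i) + 2 ^ n)) := by
      rw [hS2, Finset.mul_sum]
      apply Finset.sum_congr rfl
      intro i hi
      rw [Finset.mem_Icc] at hi
      have hin : i ≤ n := by omega
      rw [hlin]
      have hg : 2 * ∑ j ∈ Finset.Icc 1 (2 ^ (n - i)), j = 2 ^ (n - i) * (2 ^ (n - i) + 1) :=
        gauss' _
      have h2 : 2 * (2 ^ (n - i) * (i * 2 ^ n) + (∑ j ∈ Finset.Icc 1 (2 ^ (n - i)), j)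
          * 2 ^ i)
          = 2 * (2 ^ (n - i) * (i * 2 ^ n)) + (2 ^ (n - i) * (2 ^ (n - i) + 1)) * 2 ^ i := by
        rw [mul_add]
        congr 1
        rw [← hg]
        ring
      rw [h2]
      obtain ⟨e, he⟩ : ∃ e, n = i + e := ⟨n - i, by omega⟩
      subst he
      rw [show i + e - i = e by omega, show 2 * (i + e) + 1 - i = i + (e + e) + 1 by omega,
        show 2 * (i + e) - i = i + (e + e) by omega]
      simp only [pow_add, pow_succ]
      ring
    rw [h1, Finset.sum_add_distrib, Finset.sum_add_distrib, Finset.sum_const, Nat.card_Icc]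
    have hA := sumA' (2 * n + 1) k' (by omega)
    have hB := sumB' (2 * n) k' (by omega)
    have hj : (2:ℕ) ^ (2 * n + 2) = 4 * 2 ^ (2 * n) := by rw [pow_succ, pow_succ]; ring
    simp only [smul_eq_mul, Nat.add_sub_cancel]
    omega
  have e3 : 2 * S3 = 2 * ((n - (k' + 1)) * 2 ^ (n - (k' + 1)) * ((k' + 1) * 2 ^ n))
      + (n - (k' + 1)) * 2 ^ (n - (k' + 1)) * ((n - (k' + 1)) * 2 ^ (n - (k' + 1)) + 1)
        * 2 ^ (k' + 1) := by
    have hg : 2 * ∑ j ∈ Finset.Icc 1 ((n - (k' + 1)) * 2 ^ (n - (k' + 1))), j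
        = (n - (k' + 1)) * 2 ^ (n - (k' + 1)) * ((n - (k' + 1)) * 2 ^ (n - (k' + 1)) + 1) :=
      gauss' _
    rw [hS3, hlin, mul_add]
    congr 1
    rw [← hg]
    ring
  have key : 2 ^ (k' + 1) * (2 ^ (n + 1) * (2 ^ (n + 1) + 1))
      + 2 ^ (k' + 1) * (2 ^ (2 * n + 2) + 2 ^ (2 * n) + k' * 2 ^ n)
      + 2 ^ (k' + 1) * (2 * ((n - (k' + 1)) * 2 ^ (n - (k' + 1)) * ((k' + 1) * 2 ^ n))
          + (n - (k' + 1)) * 2 ^ (n - (k' + 1)) * ((n - (k' + 1)) * 2 ^ (n - (k' + 1)) + 1)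
            * 2 ^ (k' + 1))
      ≤ 2 * (2 ^ (2 * n) * (7 * 2 ^ (k' + 1) + n * (n - (k' + 1)))) := by
    obtain ⟨d, rfl⟩ : ∃ d, n = (k' + 1) + d := ⟨n - (k' + 1), by omega⟩
    have hd1 : 1 ≤ d := by omega
    rw [show k' + 1 + d - (k' + 1) = d by omega]
    have hnb : k' + 1 + d + 1 ≤ 2 ^ (k' + 1) * 2 ^ d := by
      have := Nat.lt_two_pow_self (n := k' + 1 + d)
      rw [← pow_add]; omega
    set a := 2 ^ (k' + 1) with ha
    set b := 2 ^ d with hb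
    have h2n : 2 ^ (2 * (k' + 1 + d)) = a ^ 2 * b ^ 2 := by
      rw [ha, hb, ← pow_mul, ← pow_mul, ← pow_add]; ring_nf
    have h2n2 : 2 ^ (2 * (k' + 1 + d) + 2) = 4 * (a ^ 2 * b ^ 2) := by
      rw [pow_succ, pow_succ, h2n]; ring
    have hn1 : 2 ^ (k' + 1 + d + 1) = 2 * (a * b) := by
      rw [pow_succ, pow_add]; ring
    have hn : 2 ^ (k' + 1 + d) = a * b := by rw [pow_add]
    rw [h2n, h2n2, hn1, hn]
    calc a * (2 * (a * b) * (2 * (a * b) + 1))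
          + a * (4 * (a ^ 2 * b ^ 2) + a ^ 2 * b ^ 2 + k' * (a * b))
          + a * (2 * (d * b * ((k' + 1) * (a * b))) + d * b * (d * b + 1) * a)
        = 9 * (a * a * a * b * b) + (k' + 1 + d + 1) * (a * (a * b))
            + (2 * (k' + 1) * d + d * d) * (a * a * b * b) := by ring
      _ ≤ 9 * (a * a * a * b * b) + (a * b) * (a * (a * b))
            + (2 * (k' + 1) * d + d * d) * (a * a * b * b) := by
          exact Nat.add_le_add_right
            (Nat.add_le_add_left (Nat.mul_le_mul_right _ hnb) _) _
      _ = 10 * (a * a * a * b * b) + (2 * (k' + 1) * d + d * d) * (a * a * b * b) := by ring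
      _ ≤ 14 * (a * a * a * b * b)
            + (2 * (k' + 1) * d + (d * d + d * d)) * (a * a * b * b) := by
          apply Nat.add_le_add
          · exact Nat.mul_le_mul_right _ (by norm_num)
          · exact Nat.mul_le_mul_right _ (Nat.add_le_add_left (Nat.le_add_left _ _) _)
      _ = 2 * (a ^ 2 * b ^ 2 * (7 * a + (k' + 1 + d) * d)) := by ring
  have final : 2 * (2 ^ (k' + 1) * (S1 + S2 + S3))
      ≤ 2 * (2 ^ (2 * n) * (7 * 2 ^ (k' + 1) + n * (n - (k' + 1)))) := by
    calc 2 * (2 ^ (k' + 1) * (S1 + S2 + S3))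
        = 2 ^ (k' + 1) * (2 * S1) + 2 ^ (k' + 1) * (2 * S2) + 2 ^ (k' + 1) * (2 * S3) := by
          ring
      _ ≤ 2 ^ (k' + 1) * (2 ^ (n + 1) * (2 ^ (n + 1) + 1))
          + 2 ^ (k' + 1) * (2 ^ (2 * n + 2) + 2 ^ (2 * n) + k' * 2 ^ n)
          + 2 ^ (k' + 1) * (2 * ((n - (k' + 1)) * 2 ^ (n - (k' + 1)) * ((k' + 1) * 2 ^ n))
              + (n - (k' + 1)) * 2 ^ (n - (k' + 1))
                * ((n - (k' + 1)) * 2 ^ (n - (k' + 1)) + 1) * 2 ^ (k' + 1)) := by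
          rw [e1, e3]
          exact Nat.add_le_add_right (Nat.add_le_add_left (Nat.mul_le_mul_left _ b2) _) _
      _ ≤ 2 * (2 ^ (2 * n) * (7 * 2 ^ (k' + 1) + n * (n - (k' + 1)))) := key
  omega
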